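/- arXiv:1007.3459 — 4 statements merged into one kernel-verified Lean document; each statement's English description precedes it below -/
import Mathlib

section
/- For every positive integer n, the sum over all unordered partitions of n of the number of distinct parts in the partition equals the total number of occurrences of the part 1 among all unordered partitions of n; that is, S(n) = Q_1(n). -/
/-- Number of unordered partitions of `n` (so `P 0 = 1`, via the empty partition). -/
def P (n : ℕ) : ℕ := Fintype.card (Nat.Partition n)

/-- Total number of occurrences of `k`, counted with multiplicity,
among all unordered partitions of `n` (so `Q k 0 = 0`). -/
def Q (k n : ℕ) : ℕ := ∑ p : Nat.Partition n, p.parts.count k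

/-- Sum over all unordered partitions of `n` of the number of distinct parts. -/
def S (n : ℕ) : ℕ := ∑ p : Nat.Partition n, p.parts.toFinset.card

/-- Number of unordered partitions of `n` containing `k` as a part. -/
def R (k n : ℕ) : ℕ := (Finset.univ.filter (fun p : Nat.Partition n => k ∈ p.parts)).card

def subEquiv (n : ℕ) (s : Multiset ℕ) (hpos : ∀ x ∈ s, 0 < x) (hs : s.sum ≤ n) :
    {p : Nat.Partition n // s ≤ p.parts} ≃ Nat.Partition (n - s.sum) where
  toFun := fun ⟨p, hp⟩ =>
    ⟨p.parts - s,
     fun {i} hi => p.parts_pos (Multiset.mem_of_le (Multiset.sub_le_self _ _) hi),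
     by
      have h := tsub_add_cancel_of_le hp
      have := congrArg Multiset.sum h
      rw [Multiset.sum_add] at this
      have h2 := p.parts_sum
      omega⟩
  invFun := fun q =>
    ⟨⟨s + q.parts,
      fun {i} hi => by
        rcases Multiset.mem_add.1 hi with h | h
        · exact hpos i h
        · exact q.parts_pos h,
      by rw [Multiset.sum_add, q.parts_sum]; omega⟩,
     Multiset.le_add_right _ _⟩
  left_inv := fun ⟨p, hp⟩ => by
    apply Subtype.ext
    cases p
    simp only [Nat.Partition.mk.injEq]
    exact add_tsub_cancel_of_le hp
  right_inv := fun q => by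
    cases q
    simp only [Nat.Partition.mk.injEq]
    exact add_tsub_cancel_left _ _

lemma card_sub (n : ℕ) (s : Multiset ℕ) (hpos : ∀ x ∈ s, 0 < x) (hs : s.sum ≤ n) :
    (Finset.univ.filter (fun p : Nat.Partition n => s ≤ p.parts)).card = P (n - s.sum) := by
  rw [← Fintype.card_subtype]
  exact Fintype.card_congr (subEquiv n s hpos hs)

lemma card_mem (n k : ℕ) (hk : 0 < k) (hkn : k ≤ n) : R k n = P (n - k) := by
  have h := card_sub n {k} (fun x hx => by rw [Multiset.mem_singleton] at hx; omega)
    (by rw [Multiset.sum_singleton]; exact hkn)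
  simp only [Multiset.sum_singleton] at h
  rw [← h, R]
  congr 1
  apply Finset.filter_congr
  intro p _
  exact Multiset.singleton_le.symm

lemma card_count (n m : ℕ) (hm : 0 < m) (hmn : m ≤ n) :
    (Finset.univ.filter (fun p : Nat.Partition n => m ≤ p.parts.count 1)).card = P (n - m) := by
  have h := card_sub n (Multiset.replicate m 1)
    (fun x hx => by rw [Multiset.eq_of_mem_replicate hx]; omega)
    (by rw [Multiset.sum_replicate, smul_eq_mul, mul_one]; exact hmn)
  simp only [Multiset.sum_replicate, smul_eq_mul, mul_one] at h
  rw [← h]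
  congr 1
  apply Finset.filter_congr
  intro p _
  exact Multiset.le_count_iff_replicate_le

theorem stanley (n : ℕ) (hn : 0 < n) : S n = Q 1 n := by
  have hS : S n = ∑ k ∈ Finset.Icc 1 n, P (n - k) := by
    have step : ∀ p : Nat.Partition n,
        p.parts.toFinset.card = ((Finset.Icc 1 n).filter (fun k => k ∈ p.parts)).card := by
      intro p
      congr 1
      ext k
      simp only [Finset.mem_filter, Multiset.mem_toFinset, Finset.mem_Icc]
      constructor
      · intro hk
        refine ⟨⟨p.parts_pos hk, ?_⟩, hk⟩
        calc k ≤ p.parts.sum := Multiset.le_sum_of_mem hk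
        _ = n := p.parts_sum
      · exact fun h => h.2
    rw [S]
    simp_rw [step, Finset.card_filter]
    rw [Finset.sum_comm]
    refine Finset.sum_congr rfl fun k hk => ?_
    rw [Finset.mem_Icc] at hk
    rw [← Finset.card_filter, ← R, card_mem n k hk.1 hk.2]
  have hQ : Q 1 n = ∑ m ∈ Finset.Icc 1 n, P (n - m) := by
    have step : ∀ p : Nat.Partition n,
        p.parts.count 1 = ((Finset.Icc 1 n).filter (fun m => m ≤ p.parts.count 1)).card := by
      intro p
      have hle : p.parts.count 1 ≤ n := by
        have h1 : Multiset.replicate (p.parts.count 1) 1 ≤ p.parts :=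
          Multiset.le_count_iff_replicate_le.1 le_rfl
        obtain ⟨u, hu⟩ := Multiset.le_iff_exists_add.1 h1
        have := congrArg Multiset.sum hu
        rw [Multiset.sum_add, Multiset.sum_replicate, smul_eq_mul, mul_one,
          p.parts_sum] at this
        omega
      have : (Finset.Icc 1 n).filter (fun m => m ≤ p.parts.count 1)
          = Finset.Icc 1 (p.parts.count 1) := by
        ext m
        simp only [Finset.mem_filter, Finset.mem_Icc]
        omega
      rw [this, Nat.card_Icc]
      omega
    rw [Q]
    rw [Finset.sum_congr rfl fun p (_ : p ∈ Finset.univ) => step p]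
    simp_rw [Finset.card_filter]
    rw [Finset.sum_comm]
    refine Finset.sum_congr rfl fun m hm => ?_
    rw [Finset.mem_Icc] at hm
    rw [← Finset.card_filter, card_count n m hm.1 hm.2]
  rw [hS, hQ]
end

section
/- For all positive integers n and k, the sum over all unordered partitions of n of the number of distinct parts equals the sum over i = 0, 1, ..., k-1 of the total number of occurrences of k among all partitions of n+i; that is, S(n) = Q_k(n) + Q_k(n+1) + ... + Q_k(n+k-1). -/
/-- Partitions of `N + k` containing `k` are in bijection with partitions of `N`. -/
def addPartEquiv (k N : ℕ) (hk : 0 < k) :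
    Nat.Partition N ≃ {p : Nat.Partition (N + k) // k ∈ p.parts} where
  toFun q := ⟨⟨k ::ₘ q.parts,
      by intro i hi; rcases Multiset.mem_cons.mp hi with h | h
         · exact h ▸ hk
         · exact q.parts_pos h,
      by simp [Multiset.sum_cons, q.parts_sum, Nat.add_comm]⟩,
    Multiset.mem_cons_self _ _⟩
  invFun p := ⟨p.1.parts.erase k,
      fun {i} hi => p.1.parts_pos (Multiset.mem_of_mem_erase hi),
      by
        have h := Multiset.cons_erase p.2
        have := congrArg Multiset.sum h
        rw [Multiset.sum_cons, p.1.parts_sum] at this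
        omega⟩
  left_inv q := by
    ext1
    simp
  right_inv p := by
    apply Subtype.ext
    ext1
    exact Multiset.cons_erase p.2

lemma sum_parts_filter (k N : ℕ) (hk : 0 < k) (f : Multiset ℕ → ℕ) :
    ∑ p ∈ Finset.univ.filter (fun p : Nat.Partition (N + k) => k ∈ p.parts), f p.parts
      = ∑ q : Nat.Partition N, f (k ::ₘ q.parts) := by
  rw [Finset.sum_subtype (Finset.univ.filter
      (fun p : Nat.Partition (N + k) => k ∈ p.parts))
      (p := fun p : Nat.Partition (N + k) => k ∈ p.parts) (by simp)
      (fun p => f p.parts)]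
  exact (Fintype.sum_equiv (addPartEquiv k N hk) _ _ (fun q => rfl)).symm

lemma Q_add (k N : ℕ) (hk : 0 < k) : Q k (N + k) = Q k N + P N := by
  have h0 : Q k (N + k)
      = ∑ p ∈ Finset.univ.filter (fun p : Nat.Partition (N + k) => k ∈ p.parts),
          p.parts.count k := by
    rw [Q]
    rw [Finset.sum_filter_of_ne]
    intro p _ hp
    exact Multiset.count_ne_zero.mp hp
  rw [h0, sum_parts_filter k N hk (fun s => s.count k)]
  rw [Q, P, ← Finset.card_univ, Finset.card_eq_sum_ones]
  simp [Multiset.count_cons_self, Finset.sum_add_distrib]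

lemma Q_small (k N : ℕ) (h : N < k) : Q k N = 0 := by
  rw [Q]
  apply Finset.sum_eq_zero
  intro p _
  rw [Multiset.count_eq_zero]
  intro hmem
  have := Multiset.single_le_sum (fun x _ => Nat.zero_le x) k hmem
  rw [p.parts_sum] at this
  omega

lemma R_eq (j n : ℕ) (hj : 0 < j) (hjn : j ≤ n) : R j n = P (n - j) := by
  obtain ⟨m, rfl⟩ : ∃ m, n = m + j := ⟨n - j, by omega⟩
  have : (m + j) - j = m := by omega
  rw [this, R]
  rw [Finset.card_eq_sum_ones]
  rw [sum_parts_filter j m hj (fun _ => 1)]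
  rw [P, ← Finset.card_univ, Finset.card_eq_sum_ones]

lemma S_eq (n : ℕ) : S n = ∑ j ∈ Finset.Icc 1 n, R j n := by
  have h1 : ∀ p : Nat.Partition n,
      p.parts.toFinset = (Finset.Icc 1 n).filter (fun j => j ∈ p.parts) := by
    intro p
    ext j
    simp only [Multiset.mem_toFinset, Finset.mem_filter, Finset.mem_Icc]
    constructor
    · intro hj
      refine ⟨⟨p.parts_pos hj, ?_⟩, hj⟩
      have := Multiset.single_le_sum (fun x _ => Nat.zero_le x) j hj
      rw [p.parts_sum] at this
      exact this
    · exact fun h => h.2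
  rw [S]
  have h2 : ∀ p : Nat.Partition n, p.parts.toFinset.card
      = ∑ j ∈ Finset.Icc 1 n, if j ∈ p.parts then 1 else 0 := by
    intro p
    rw [h1 p, Finset.card_filter]
  simp_rw [h2]
  rw [Finset.sum_comm]
  refine Finset.sum_congr rfl fun j _ => ?_
  rw [R, Finset.card_filter]

lemma S_eq' (n : ℕ) : S n = ∑ v ∈ Finset.range n, P v := by
  rw [S_eq]
  have h : ∀ j ∈ Finset.Icc 1 n, R j n = P (n - j) := fun j hj => by
    rw [Finset.mem_Icc] at hj
    exact R_eq j n hj.1 hj.2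
  rw [Finset.sum_congr rfl h]
  apply Finset.sum_nbij' (i := fun j => n - j) (j := fun v => n - v)
  · intro a ha
    rw [Finset.mem_Icc] at ha
    rw [Finset.mem_range]
    omega
  · intro a ha
    rw [Finset.mem_range] at ha
    rw [Finset.mem_Icc]
    omega
  · intro a ha
    rw [Finset.mem_Icc] at ha
    omega
  · intro a ha
    rw [Finset.mem_range] at ha
    omega
  · intro a _
    rfl

lemma main_sum (k : ℕ) (hk : 0 < k) :
    ∀ n : ℕ, ∑ i ∈ Finset.range k, Q k (n + i) = ∑ v ∈ Finset.range n, P v := by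
  intro n
  induction n with
  | zero =>
    simp only [Finset.range_zero, Finset.sum_empty, Nat.zero_add]
    apply Finset.sum_eq_zero
    intro i hi
    exact Q_small k i (Finset.mem_range.mp hi)
  | succ n ih =>
    have key : ∑ i ∈ Finset.range (k + 1), Q k (n + i)
        = ∑ i ∈ Finset.range (k + 1), Q k (n + i) := rfl
    have e1 : ∑ i ∈ Finset.range (k + 1), Q k (n + i)
        = (∑ i ∈ Finset.range k, Q k (n + i)) + Q k (n + k) :=
      Finset.sum_range_succ _ _
    have e2 : ∑ i ∈ Finset.range (k + 1), Q k (n + i)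
        = (∑ i ∈ Finset.range k, Q k (n + (i + 1))) + Q k (n + 0) :=
      Finset.sum_range_succ' _ _
    have e3 : ∑ i ∈ Finset.range k, Q k (n + (i + 1))
        = ∑ i ∈ Finset.range k, Q k ((n + 1) + i) := by
      refine Finset.sum_congr rfl fun i _ => ?_
      ring_nf
    rw [Q_add k n hk] at e1
    rw [Finset.sum_range_succ, ← ih]
    simp only [Nat.add_zero] at e2
    rw [e3] at e2
    omega

theorem stanley_extension (n k : ℕ) (hn : 0 < n) (hk : 0 < k) :
    S n = ∑ i ∈ Finset.range k, Q k (n + i) := by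
  rw [S_eq' n, main_sum k hk n]
end

section
/- For every positive integer n, the total number of occurrences of the part 1 among all partitions of n equals the sum of the partition numbers of 0, 1, ..., n-1; that is, Q_1(n) = P(0) + P(1) + ... + P(n-1), where P(0) = 1. -/
open Finset in
lemma Q_one_step (n : ℕ) : Q 1 (n+1) = P n + Q 1 n := by
  classical
  have h : Q 1 (n+1) = ∑ p ∈ univ.filter (fun p : Nat.Partition (n+1) => 1 ∈ p.parts),
      p.parts.count 1 := by
    rw [Q, Finset.sum_filter_of_ne]
    intro p _ hc
    exact Multiset.count_pos.mp (Nat.pos_of_ne_zero hc)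
  have h2 : P n + Q 1 n = ∑ q : Nat.Partition n, (q.parts.count 1 + 1) := by
    rw [Finset.sum_add_distrib, P, Q, Fintype.card_eq_sum_ones]
    exact Nat.add_comm _ _
  rw [h, h2]
  refine Finset.sum_bij'
    (fun p hp => (⟨p.parts.erase 1,
      fun hi => p.parts_pos (Multiset.mem_of_mem_erase hi), ?_⟩ : Nat.Partition n))
    (fun q _ => (⟨1 ::ₘ q.parts, ?_, ?_⟩ : Nat.Partition (n+1))) ?_ ?_ ?_ ?_ ?_
  · have h1 : (1 : ℕ) ∈ p.parts := (Finset.mem_filter.mp hp).2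
    have := Multiset.cons_erase h1
    have hs := p.parts_sum
    rw [← this, Multiset.sum_cons] at hs
    omega
  · intro i hi
    rcases Multiset.mem_cons.mp hi with rfl | hi
    · exact Nat.one_pos
    · exact q.parts_pos hi
  · rw [Multiset.sum_cons, q.parts_sum]; exact Nat.add_comm _ _
  · intro a ha; exact Finset.mem_univ _
  · intro a ha
    simp [Multiset.mem_cons]
  · intro a ha
    have h1 : (1 : ℕ) ∈ a.parts := (Finset.mem_filter.mp ha).2
    exact Nat.Partition.ext (Multiset.cons_erase h1)
  · intro a ha
    exact Nat.Partition.ext (Multiset.erase_cons_head _ _)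
  · intro a ha
    have h1 : (1 : ℕ) ∈ a.parts := (Finset.mem_filter.mp ha).2
    simp only
    rw [← Multiset.cons_erase h1, Multiset.count_cons_self, Multiset.erase_cons_head]

lemma Q_one_zero : Q 1 0 = 0 := by
  rw [Q]
  apply Finset.sum_eq_zero
  intro p _
  have : p.parts = 0 := by
    ext a
    simp only [Multiset.count_zero]
    by_contra hc
    have ha : a ∈ p.parts := Multiset.count_pos.mp (Nat.pos_of_ne_zero hc)
    have h0 := Multiset.sum_eq_zero_iff.mp p.parts_sum a ha
    have h1 := p.parts_pos ha
    omega
  simp [this]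

theorem Q_one_eq_sum_P (n : ℕ) (hn : 0 < n) :
    Q 1 n = ∑ i ∈ Finset.range n, P i := by
  clear hn
  induction n with
  | zero => simpa using Q_one_zero
  | succ m ih => rw [Q_one_step, ih, Finset.sum_range_succ, Nat.add_comm]
end

section
/- For every positive integer k, the generating function identity (1 - X^k) · Σ_{m ≥ 0} Q_k(m) X^m = X^k · Σ_{m ≥ 0} P(m) X^m holds in the ring of formal power series over the integers, where P(0) = 1 and Q_k(0) = 0. -/
lemma Q_eq_zero_of_lt {k n : ℕ} (h : n < k) : Q k n = 0 := by
  refine Finset.sum_eq_zero fun p _ => ?_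
  rw [Multiset.count_eq_zero]
  intro hmem
  have : k ≤ p.parts.sum := Multiset.single_le_sum (fun x _ => Nat.zero_le x) _ hmem
  rw [p.parts_sum] at this
  omega

lemma Q_rec (k n : ℕ) (hk : 0 < k) : Q k (n + k) = Q k n + P n := by
  classical
  have hzero : ∀ p ∈ Finset.univ.filter
      (fun p : Nat.Partition (n + k) => k ∉ p.parts), p.parts.count k = 0 := by
    intro p hp
    rw [Finset.mem_filter] at hp
    exact Multiset.count_eq_zero.2 hp.2
  have hsplit : Q k (n + k) = ∑ p ∈ Finset.univ.filter
      (fun p : Nat.Partition (n + k) => k ∈ p.parts), p.parts.count k := by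
    rw [Q, ← Finset.sum_filter_add_sum_filter_not Finset.univ
      (fun p : Nat.Partition (n + k) => k ∈ p.parts)]
    rw [Finset.sum_eq_zero hzero, add_zero]
  rw [hsplit]
  have key : ∑ p ∈ Finset.univ.filter
      (fun p : Nat.Partition (n + k) => k ∈ p.parts), p.parts.count k
      = ∑ q : Nat.Partition n, (q.parts.count k + 1) := by
    refine Finset.sum_bij'
      (i := fun (p : Nat.Partition (n + k)) hp =>
        (⟨p.parts.erase k, fun hi => p.parts_pos (Multiset.mem_of_mem_erase hi), by
          have hm : k ∈ p.parts := (Finset.mem_filter.1 hp).2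
          have h1 := Multiset.cons_erase hm
          have h2 : (k ::ₘ p.parts.erase k).sum = n + k := by rw [h1, p.parts_sum]
          rw [Multiset.sum_cons] at h2
          omega⟩ : Nat.Partition n))
      (j := fun (q : Nat.Partition n) _ =>
        (⟨k ::ₘ q.parts, fun hi => by
            rcases Multiset.mem_cons.1 hi with h | h
            · exact h ▸ hk
            · exact q.parts_pos h, by simp [q.parts_sum, add_comm]⟩ :
          Nat.Partition (n + k)))
      ?_ ?_ ?_ ?_ ?_
    · intro p hp; exact Finset.mem_univ _
    · intro q hq
      simp only [Finset.mem_filter, Finset.mem_univ, true_and]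
      exact Multiset.mem_cons_self _ _
    · intro p hp
      exact Nat.Partition.ext (Multiset.cons_erase (Finset.mem_filter.1 hp).2)
    · intro q hq
      exact Nat.Partition.ext (Multiset.erase_cons_head _ _)
    · intro p hp
      simp only
      rw [Multiset.count_erase_self]
      have : 1 ≤ p.parts.count k :=
        Multiset.one_le_count_iff_mem.2 (Finset.mem_filter.1 hp).2
      omega
  rw [key, Finset.sum_add_distrib]
  simp [Q, P]

theorem Q_generating_function (k : ℕ) (hk : 0 < k) :
    (1 - PowerSeries.X ^ k) * PowerSeries.mk (fun m => (Q k m : ℤ))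
      = PowerSeries.X ^ k * PowerSeries.mk (fun m => (P m : ℤ)) := by
  ext n
  rw [sub_mul, one_mul, map_sub, PowerSeries.coeff_X_pow_mul', PowerSeries.coeff_X_pow_mul',
    PowerSeries.coeff_mk]
  split_ifs with h
  · rw [PowerSeries.coeff_mk, PowerSeries.coeff_mk]
    have := Q_rec k (n - k) hk
    rw [Nat.sub_add_cancel h] at this
    rw [this]; push_cast; ring
  · rw [Q_eq_zero_of_lt (Nat.lt_of_not_le h)]
    simp
end
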